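/- Let K be a convex body in ℝⁿ and let λ ∈ [0,1]. Define C ⊂ ℝ × ℝⁿ as the convex hull of ({0} × (1−λ)K) ∪ ({1} × (−λK)). Then the (n+1)-dimensional Lebesgue volume of C satisfies vol_{n+1}(C) ≤ vol_n(K)/(n+1). -/

import Mathlib

open MeasureTheory Set Pointwise
open scoped ENNReal NNReal

/-! Auxiliary lemmas for the averaged Godbersen inequality
(Artstein-Avidan–Einhorn–Florentin–Ostrover). -/

private lemma combo_mem {V : Type*} [AddCommGroup V] [Module ℝ V] {K : Set V}
    (hK : Convex ℝ K) (hne : K.Nonempty) {c₁ c₂ : ℝ} (h₁ : 0 ≤ c₁) (h₂ : 0 ≤ c₂)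
    {u v : V} (hu : u ∈ K) (hv : v ∈ K) :
    c₁ • u + c₂ • v ∈ (c₁ + c₂) • K := by
  rcases eq_or_lt_of_le (add_nonneg h₁ h₂) with h | h
  · have hc₁ : c₁ = 0 := by linarith
    have hc₂ : c₂ = 0 := by linarith
    simp only [hc₁, hc₂, zero_smul, add_zero]
    rw [zero_smul_set hne]
    simp
  · have h₁' : 0 ≤ c₁ / (c₁ + c₂) := div_nonneg h₁ h.le
    have h₂' : 0 ≤ c₂ / (c₁ + c₂) := div_nonneg h₂ h.le
    have hsum : c₁ / (c₁ + c₂) + c₂ / (c₁ + c₂) = 1 := by field_simp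
    refine ⟨(c₁ / (c₁ + c₂)) • u + (c₂ / (c₁ + c₂)) • v, hK hu hv h₁' h₂' hsum, ?_⟩
    show (c₁ + c₂) • ((c₁ / (c₁ + c₂)) • u + (c₂ / (c₁ + c₂)) • v) = c₁ • u + c₂ • v
    have e1 : (c₁ + c₂) * (c₁ / (c₁ + c₂)) = c₁ := by field_simp
    have e2 : (c₁ + c₂) * (c₂ / (c₁ + c₂)) = c₂ := by field_simp
    rw [smul_add, smul_smul, smul_smul, e1, e2]

private lemma slice_iff {n : ℕ} {K : Set (EuclideanSpace ℝ (Fin n))} (hK : Convex ℝ K)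
    (hne : K.Nonempty) {lam : ℝ} (hl0 : 0 ≤ lam) (hl1 : lam ≤ 1) (t : ℝ)
    (x : EuclideanSpace ℝ (Fin n)) :
    ((t, x) ∈ convexHull ℝ
        (({0} : Set ℝ) ×ˢ ((1 - lam) • K) ∪ ({1} : Set ℝ) ×ˢ (-(lam • K)))) ↔
      (t ∈ Icc (0:ℝ) 1 ∧ ∃ a ∈ K, ∃ b ∈ K, x = ((1-t)*(1-lam)) • a - (t*lam) • b) := by
  obtain ⟨k₀, hk₀⟩ := hne
  have hS₀ : Convex ℝ (({0} : Set ℝ) ×ˢ ((1 - lam) • K)) :=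
    (convex_singleton _).prod (hK.smul _)
  have hS₁ : Convex ℝ (({1} : Set ℝ) ×ˢ (-(lam • K))) :=
    (convex_singleton _).prod ((hK.smul _).neg)
  have hne₀ : (({0} : Set ℝ) ×ˢ ((1 - lam) • K)).Nonempty :=
    ⟨(0, (1 - lam) • k₀), mem_prod.mpr ⟨rfl, smul_mem_smul_set hk₀⟩⟩
  have hne₁ : (({1} : Set ℝ) ×ˢ (-(lam • K))).Nonempty :=
    ⟨(1, -(lam • k₀)), mem_prod.mpr ⟨rfl, neg_mem_neg.mpr (smul_mem_smul_set hk₀)⟩⟩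
  rw [hS₀.convexHull_union hS₁ hne₀ hne₁, mem_convexJoin]
  constructor
  · rintro ⟨p, hp, q, hq, hseg⟩
    rw [segment_eq_image] at hseg
    obtain ⟨θ, hθ, heq⟩ := hseg
    obtain ⟨hp1, hp2⟩ := mem_prod.mp hp
    obtain ⟨hq1, hq2⟩ := mem_prod.mp hq
    obtain ⟨a, ha, hpa⟩ := mem_smul_set.mp hp2
    obtain ⟨b, hb, hqb⟩ := mem_smul_set.mp (mem_neg.mp hq2)
    rw [mem_singleton_iff] at hp1 hq1
    have h1 : (1 - θ) • p.1 + θ • q.1 = t := by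
      have := congrArg Prod.fst heq; simpa using this
    have h2 : (1 - θ) • p.2 + θ • q.2 = x := by
      have := congrArg Prod.snd heq; simpa using this
    have hθt : θ = t := by
      rw [hp1, hq1] at h1; simpa using h1
    subst hθt
    refine ⟨hθ, a, ha, b, hb, ?_⟩
    have hp2' : p.2 = (1 - lam) • a := hpa.symm
    have hq2' : q.2 = -(lam • b) := by rw [hqb, neg_neg]
    rw [← h2, hp2', hq2']
    module
  · rintro ⟨⟨ht0, ht1⟩, a, ha, b, hb, hx⟩
    refine ⟨(0, (1 - lam) • a), mem_prod.mpr ⟨rfl, smul_mem_smul_set ha⟩,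
      (1, -(lam • b)), mem_prod.mpr ⟨rfl, neg_mem_neg.mpr (smul_mem_smul_set hb)⟩, ?_⟩
    rw [segment_eq_image]
    refine ⟨t, ⟨ht0, ht1⟩, ?_⟩
    refine Prod.ext ?_ ?_
    · simp
    · show (1 - t) • ((1 - lam) • a) + t • (-(lam • b)) = x
      rw [hx]; module

private lemma isCompact_convexJoin {X : Type*} [NormedAddCommGroup X] [NormedSpace ℝ X]
    {s t : Set X} (hs : IsCompact s) (ht : IsCompact t) : IsCompact (convexJoin ℝ s t) := by
  have hrw : convexJoin ℝ s t =
      (fun q : (X × X) × ℝ => (1 - q.2) • q.1.1 + q.2 • q.1.2) '' ((s ×ˢ t) ×ˢ Icc (0:ℝ) 1) := by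
    ext z
    constructor
    · intro hz
      obtain ⟨a, ha, b, hb, hseg⟩ := mem_convexJoin.mp hz
      rw [segment_eq_image] at hseg
      obtain ⟨θ, hθ, h⟩ := hseg
      exact ⟨((a, b), θ), mem_prod.mpr ⟨mem_prod.mpr ⟨ha, hb⟩, hθ⟩, h⟩
    · rintro ⟨⟨⟨a, b⟩, θ⟩, hmem, h⟩
      obtain ⟨hab, hθ⟩ := mem_prod.mp hmem
      obtain ⟨ha, hb⟩ := mem_prod.mp hab
      refine mem_convexJoin.mpr ⟨a, ha, b, hb, ?_⟩
      rw [segment_eq_image]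
      exact ⟨θ, hθ, h⟩
  rw [hrw]
  refine ((hs.prod ht).prod isCompact_Icc).image ?_
  fun_prop

private lemma conv_vol {n : ℕ} {S T : Set (EuclideanSpace ℝ (Fin n))}
    (hS : MeasurableSet S) (hT : MeasurableSet T) :
    ∫⁻ x : EuclideanSpace ℝ (Fin n), volume (S ∩ (x +ᵥ T)) = volume S * volume T := by
  have hmem : ∀ (x y : EuclideanSpace ℝ (Fin n)), (y ∈ x +ᵥ T) ↔ y - x ∈ T := by
    intro x y
    rw [Set.mem_vadd_set_iff_neg_vadd_mem, vadd_eq_add, neg_add_eq_sub]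
  have key : ∀ x : EuclideanSpace ℝ (Fin n), volume (S ∩ (x +ᵥ T)) =
      ∫⁻ y, S.indicator 1 y * T.indicator 1 (y - x) := by
    intro x
    have hTx : MeasurableSet (x +ᵥ T) := by
      rw [show x +ᵥ T = (fun y => x + y) '' T from (Set.image_vadd).symm]
      exact (Homeomorph.addLeft x).toMeasurableEquiv.measurableSet_image.mpr hT
    rw [← lintegral_indicator_one (hS.inter hTx)]
    refine lintegral_congr fun y => ?_
    rw [Set.inter_indicator_one]
    simp only [Pi.mul_apply]
    congr 1
    by_cases hy : y - x ∈ T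
    · rw [Set.indicator_of_mem ((hmem x y).mpr hy), Set.indicator_of_mem hy,
        Pi.one_apply, Pi.one_apply]
    · rw [Set.indicator_of_notMem (fun h => hy ((hmem x y).mp h)),
        Set.indicator_of_notMem hy]
  have hmeas : Measurable (Function.uncurry fun (x y : EuclideanSpace ℝ (Fin n)) =>
      (S.indicator 1 y * T.indicator 1 (y - x) : ℝ≥0∞)) := by
    have h1 : Measurable fun p : (EuclideanSpace ℝ (Fin n)) × (EuclideanSpace ℝ (Fin n)) =>
        (S.indicator 1 p.2 * T.indicator 1 (p.2 - p.1) : ℝ≥0∞) := by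
      apply Measurable.mul
      · exact (measurable_one.indicator hS).comp measurable_snd
      · exact (measurable_one.indicator hT).comp (measurable_snd.sub measurable_fst)
    exact h1
  have inner : ∀ y, ∫⁻ x, S.indicator 1 y * T.indicator 1 (y - x) =
      S.indicator 1 y * volume T := by
    intro y
    rw [lintegral_const_mul' _ _ (by by_cases h : y ∈ S <;> simp [h])]
    congr 1
    rw [(Measure.measurePreserving_sub_left volume y).lintegral_comp
      (measurable_one.indicator hT)]
    exact lintegral_indicator_one hT
  rw [lintegral_congr key]
  rw [lintegral_lintegral_swap hmeas.aemeasurable]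
  rw [lintegral_congr inner]
  rw [lintegral_mul_const _ (measurable_one.indicator hS)]
  rw [lintegral_indicator_one hS]

private lemma lint_Icc {a b : ℝ} (hab : a ≤ b) {f : ℝ → ℝ} (hf : Continuous f)
    (h0 : ∀ x ∈ Icc a b, 0 ≤ f x) :
    ∫⁻ t in Icc a b, ENNReal.ofReal (f t) = ENNReal.ofReal (∫ t in a..b, f t) := by
  rw [← Measure.restrict_congr_set Ioc_ae_eq_Icc,
    ← ofReal_integral_eq_lintegral_ofReal
      ((hf.integrableOn_Icc).mono_set Ioc_subset_Icc_self)
      ((ae_restrict_iff' measurableSet_Ioc).mpr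
        (ae_of_all _ fun x hx => h0 x (Ioc_subset_Icc_self hx))),
    intervalIntegral.integral_of_le hab]

private lemma integral_one_sub_pow (m : ℕ) :
    ∫ t in (0:ℝ)..1, (1 - t)^m = ((m:ℝ)+1)⁻¹ := by
  have h := intervalIntegral.integral_comp_sub_left (a := (0:ℝ)) (b := 1)
    (fun x : ℝ => x ^ m) 1
  simp only [sub_self, sub_zero] at h
  rw [h, integral_pow]
  rw [one_pow, zero_pow (by omega), sub_zero, one_div]

private lemma integral_n_onesub {m : ℕ} (hm : 1 ≤ m) (ρ : ℝ) :
    ∫ r in ρ..1, ((m:ℝ) * (1-r)^(m-1)) = (1-ρ)^m := by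
  have hd : ∀ r ∈ uIcc ρ 1, HasDerivAt (fun u : ℝ => -(1-u)^m)
      ((m:ℝ) * (1-r)^(m-1)) r := by
    intro r _
    have hin : HasDerivAt (fun u : ℝ => 1 - u) (-1) r := (hasDerivAt_id r).const_sub 1
    have h2 : HasDerivAt (fun u : ℝ => (1-u)^m) ((m:ℝ) * (1-r)^(m-1) * -1) r :=
      (hasDerivAt_pow m (1-r)).comp r hin
    have h3 := h2.neg
    have he : -((m:ℝ) * (1-r)^(m-1) * -1) = (m:ℝ)*(1-r)^(m-1) := by ring
    exact he ▸ h3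
  rw [intervalIntegral.integral_eq_sub_of_hasDerivAt hd
    (Continuous.intervalIntegrable
      (continuous_const.mul ((continuous_const.sub continuous_id').pow (m-1))) _ _)]
  rw [sub_self, zero_pow (by omega), neg_zero, zero_sub, neg_neg]

private lemma beta_rel {m : ℕ} (hm : 1 ≤ m) :
    ∫ r in (0:ℝ)..1, ((m:ℝ) * (1-r)^(m-1) * r^(m+1)) =
      ((m:ℝ)+1) * ∫ r in (0:ℝ)..1, r^m * (1-r)^m := by
  have hcont1 : Continuous fun r : ℝ => ((m:ℝ)+1) * r^m * (1-r)^m :=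
    (continuous_const.mul (continuous_pow m)).mul ((continuous_const.sub continuous_id').pow m)
  have hcont2 : Continuous fun r : ℝ => (m:ℝ) * (1-r)^(m-1) * r^(m+1) :=
    (continuous_const.mul ((continuous_const.sub continuous_id').pow (m-1))).mul
      (continuous_pow (m+1))
  have hd : ∀ r ∈ uIcc (0:ℝ) 1, HasDerivAt (fun u : ℝ => u^(m+1) * (1-u)^m)
      (((m:ℝ)+1) * r^m * (1-r)^m - (m:ℝ) * (1-r)^(m-1) * r^(m+1)) r := by
    intro r _
    have h1 : HasDerivAt (fun u : ℝ => u^(m+1)) (((m:ℝ)+1) * r^m) r := by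
      have := hasDerivAt_pow (m+1) r
      simp only [Nat.add_sub_cancel] at this
      have hc : ((m+1 : ℕ) : ℝ) = (m:ℝ)+1 := by push_cast; ring
      rwa [hc] at this
    have hin : HasDerivAt (fun u : ℝ => 1 - u) (-1) r := (hasDerivAt_id r).const_sub 1
    have h2 : HasDerivAt (fun u : ℝ => (1-u)^m) ((m:ℝ) * (1-r)^(m-1) * -1) r :=
      (hasDerivAt_pow m (1-r)).comp r hin
    have key := h1.mul h2
    have he : (((m:ℝ)+1) * r^m) * ((1-r)^m) + (r^(m+1)) * ((m:ℝ) * (1-r)^(m-1) * -1)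
        = ((m:ℝ)+1) * r^m * (1-r)^m - (m:ℝ) * (1-r)^(m-1) * r^(m+1) := by ring
    exact he ▸ key
  have hFTC := intervalIntegral.integral_eq_sub_of_hasDerivAt hd
    ((hcont1.sub hcont2).intervalIntegrable 0 1)
  rw [intervalIntegral.integral_sub (hcont1.intervalIntegrable 0 1)
    (hcont2.intervalIntegrable 0 1)] at hFTC
  have hval : (1:ℝ)^(m+1) * (1-1)^m - (0:ℝ)^(m+1) * (1-0)^m = 0 := by
    rw [sub_self, zero_pow (by omega : m ≠ 0), zero_pow (by omega : m + 1 ≠ 0)]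
    ring
  rw [hval] at hFTC
  have h1 : ∫ r in (0:ℝ)..1, ((m:ℝ)+1) * r^m * (1-r)^m
      = ((m:ℝ)+1) * ∫ r in (0:ℝ)..1, r^m * (1-r)^m := by
    rw [← intervalIntegral.integral_const_mul]
    congr 1
    funext r
    ring
  rw [h1] at hFTC
  linarith

private lemma ofReal_nat_add_one (m : ℕ) :
    ENNReal.ofReal ((m:ℝ)+1) = ((m:ℝ≥0∞)+1) := by
  have hcast : ((m:ℝ)+1) = ((m+1:ℕ):ℝ) := by push_cast; ring
  rw [hcast, ENNReal.ofReal_natCast]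
  push_cast
  ring

private lemma ofReal_inv_nat_add_one (m : ℕ) :
    ENNReal.ofReal (((m:ℝ)+1)⁻¹) = ((m:ℝ≥0∞)+1)⁻¹ := by
  rw [ENNReal.ofReal_inv_of_pos (by positivity), ofReal_nat_add_one]

set_option maxHeartbeats 1000000 in
theorem godbersen_stmt0 (n : ℕ) (K : Set (EuclideanSpace ℝ (Fin n)))
    (hK_compact : IsCompact K) (hK_conv : Convex ℝ K)
    (hK_int : (interior K).Nonempty)
    (lam : ℝ) (hlam : lam ∈ Set.Icc (0:ℝ) 1)
    (C : Set (ℝ × EuclideanSpace ℝ (Fin n)))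
    (hC : C = convexHull ℝ
      (({0} : Set ℝ) ×ˢ ((1 - lam) • K) ∪ ({1} : Set ℝ) ×ˢ (-(lam • K)))) :
    volume C ≤ volume K / (n + 1) := by
  classical
  obtain ⟨hl0, hl1⟩ := hlam
  have hne : K.Nonempty := hK_int.mono interior_subset
  have hCconv : Convex ℝ C := hC ▸ convex_convexHull ℝ _
  have hS₀c : IsCompact (({0} : Set ℝ) ×ˢ ((1 - lam) • K)) :=
    isCompact_singleton.prod (hK_compact.smul (1 - lam))
  have hS₁c : IsCompact (({1} : Set ℝ) ×ˢ (-(lam • K))) :=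
    isCompact_singleton.prod (hK_compact.smul lam).neg
  have hS₀conv : Convex ℝ (({0} : Set ℝ) ×ˢ ((1 - lam) • K)) :=
    (convex_singleton _).prod (hK_conv.smul _)
  have hS₁conv : Convex ℝ (({1} : Set ℝ) ×ˢ (-(lam • K))) :=
    (convex_singleton _).prod ((hK_conv.smul _).neg)
  obtain ⟨k₀, hk₀⟩ := hne
  have hne' : K.Nonempty := ⟨k₀, hk₀⟩
  have hne₀ : (({0} : Set ℝ) ×ˢ ((1 - lam) • K)).Nonempty :=
    ⟨(0, (1 - lam) • k₀), mem_prod.mpr ⟨rfl, smul_mem_smul_set hk₀⟩⟩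
  have hne₁ : (({1} : Set ℝ) ×ˢ (-(lam • K))).Nonempty :=
    ⟨(1, -(lam • k₀)), mem_prod.mpr ⟨rfl, neg_mem_neg.mpr (smul_mem_smul_set hk₀)⟩⟩
  have hCcomp : IsCompact C := by
    rw [hC, hS₀conv.convexHull_union hS₁conv hne₀ hne₁]
    exact isCompact_convexJoin hS₀c hS₁c
  have hCm : MeasurableSet C := hCcomp.isClosed.measurableSet
  have hCfin : volume C ≠ ⊤ := hCcomp.measure_lt_top.ne
  have hslice : ∀ (t : ℝ) (x : EuclideanSpace ℝ (Fin n)), ((t, x) ∈ C) ↔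
      (t ∈ Icc (0:ℝ) 1 ∧ ∃ a ∈ K, ∃ b ∈ K, x = ((1-t)*(1-lam)) • a - (t*lam) • b) := by
    intro t x
    rw [hC]
    exact slice_iff hK_conv hne' hl0 hl1 t x
  have hKm : MeasurableSet K := hK_compact.isClosed.measurableSet
  have hvKfin : volume K ≠ ⊤ := hK_compact.measure_lt_top.ne
  have hvK0 : volume K ≠ 0 := (Measure.measure_pos_of_nonempty_interior _ hK_int).ne'
  rcases Nat.eq_zero_or_pos n with hn0 | hnpos
  · -- degenerate dimension 0
    subst hn0
    haveI : Subsingleton (EuclideanSpace ℝ (Fin 0)) :=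
      ⟨fun a b => by ext i; exact Fin.elim0 i⟩
    have hKuniv : K = univ := by
      apply eq_univ_of_forall
      intro x
      rwa [Subsingleton.elim x k₀]
    have hCsub : C ⊆ (Icc (0:ℝ) 1) ×ˢ (univ : Set (EuclideanSpace ℝ (Fin 0))) := by
      rw [hC]
      apply convexHull_min
      · rintro ⟨t, x⟩ (hz | hz) <;>
          obtain ⟨h1, -⟩ := mem_prod.mp hz <;>
          rw [mem_singleton_iff] at h1 <;>
          exact mem_prod.mpr ⟨by rw [h1]; constructor <;> norm_num, mem_univ _⟩
      · exact (convex_Icc _ _).prod convex_univ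
    have : volume C ≤ volume K := by
      calc volume C ≤ volume ((Icc (0:ℝ) 1) ×ˢ (univ : Set (EuclideanSpace ℝ (Fin 0)))) :=
            measure_mono hCsub
        _ = volume (Icc (0:ℝ) 1) * volume (univ : Set (EuclideanSpace ℝ (Fin 0))) := by
            rw [Measure.volume_eq_prod, Measure.prod_prod]
        _ = volume K := by rw [Real.volume_Icc, hKuniv]; simp
    simpa using this
  rcases eq_or_lt_of_le hl0 with hlam0 | hlam0
  · -- lam = 0 : cone
    have hlz : lam = 0 := hlam0.symm
    subst hlz
    rw [Measure.volume_eq_prod, Measure.prod_apply hCm]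
    have hpre : ∀ t : ℝ, Prod.mk t ⁻¹' C =
        if t ∈ Icc (0:ℝ) 1 then (((1:ℝ)-t) • K) else (∅ : Set (EuclideanSpace ℝ (Fin n))) := by
      intro t
      ext x
      simp only [mem_preimage]
      rw [hslice t x]
      by_cases ht : t ∈ Icc (0:ℝ) 1
      · simp only [ht, if_true, true_and]
        constructor
        · rintro ⟨a, ha, b, hb, hx⟩
          refine mem_smul_set.mpr ⟨a, ha, ?_⟩
          rw [hx]; module
        · intro hx
          obtain ⟨a, ha, hax⟩ := mem_smul_set.mp hx
          exact ⟨a, ha, a, ha, by rw [← hax]; module⟩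
      · simp only [ht, if_false, mem_empty_iff_false, iff_false]
        rintro ⟨h, -⟩
        exact h
    have hvols : ∀ t : ℝ, volume (Prod.mk t ⁻¹' C) =
        (Icc (0:ℝ) 1).indicator (fun t => ENNReal.ofReal ((1-t)^n) * volume K) t := by
      intro t
      rw [hpre t]
      by_cases ht : t ∈ Icc (0:ℝ) 1
      · rw [if_pos ht, indicator_of_mem ht, Measure.addHaar_smul, finrank_euclideanSpace_fin]
        congr 2
        rw [abs_of_nonneg (pow_nonneg (by linarith [ht.2]) n)]
      · rw [if_neg ht, indicator_of_notMem ht, measure_empty]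
    rw [lintegral_congr hvols, lintegral_indicator measurableSet_Icc,
      lintegral_mul_const' _ _ hvKfin,
      lint_Icc zero_le_one (f := fun t => (1-t)^n) ((continuous_const.sub continuous_id').pow n)
        (fun x hx => pow_nonneg (by linarith [hx.2]) n),
      integral_one_sub_pow n, ofReal_inv_nat_add_one n]
    rw [div_eq_mul_inv, mul_comm]
  rcases eq_or_lt_of_le hl1 with hlam1 | hlam1
  · -- lam = 1 : cone
    subst hlam1
    rw [Measure.volume_eq_prod, Measure.prod_apply hCm]
    have hpre : ∀ t : ℝ, Prod.mk t ⁻¹' C =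
        if t ∈ Icc (0:ℝ) 1 then ((-t) • K) else (∅ : Set (EuclideanSpace ℝ (Fin n))) := by
      intro t
      ext x
      simp only [mem_preimage]
      rw [hslice t x]
      by_cases ht : t ∈ Icc (0:ℝ) 1
      · simp only [ht, if_true, true_and]
        constructor
        · rintro ⟨a, ha, b, hb, hx⟩
          refine mem_smul_set.mpr ⟨b, hb, ?_⟩
          rw [hx]; module
        · intro hx
          obtain ⟨b, hb, hbx⟩ := mem_smul_set.mp hx
          exact ⟨b, hb, b, hb, by rw [← hbx]; module⟩
      · simp only [ht, if_false, mem_empty_iff_false, iff_false]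
        rintro ⟨h, -⟩
        exact h
    have hvols : ∀ t : ℝ, volume (Prod.mk t ⁻¹' C) =
        (Icc (0:ℝ) 1).indicator (fun t => ENNReal.ofReal (t^n) * volume K) t := by
      intro t
      rw [hpre t]
      by_cases ht : t ∈ Icc (0:ℝ) 1
      · rw [if_pos ht, indicator_of_mem ht, Measure.addHaar_smul, finrank_euclideanSpace_fin]
        congr 2
        rw [abs_pow, abs_neg, abs_of_nonneg ht.1]
      · rw [if_neg ht, indicator_of_notMem ht, measure_empty]
    rw [lintegral_congr hvols, lintegral_indicator measurableSet_Icc,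
      lintegral_mul_const' _ _ hvKfin,
      lint_Icc zero_le_one (continuous_pow n) (fun x hx => pow_nonneg hx.1 n),
      integral_pow n]
    rw [one_pow, zero_pow (by omega), sub_zero, one_div, ofReal_inv_nat_add_one n]
    rw [div_eq_mul_inv, mul_comm]
  -- MAIN CASE : 0 < lam < 1, 0 < n
  set vK := volume K with hvKdef
  haveI hPH : Measure.IsAddHaarMeasure (volume : Measure (ℝ × EuclideanSpace ℝ (Fin n))) :=
    Measure.prod.instIsAddHaarMeasure volume volume
  have hfr : Module.finrank ℝ (ℝ × EuclideanSpace ℝ (Fin n)) = n + 1 := by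
    rw [Module.finrank_prod, finrank_euclideanSpace_fin, Module.finrank_self]
    omega
  set z₀ : ℝ × EuclideanSpace ℝ (Fin n) := (1 - lam, 0) with hz₀def
  have hz₀ : z₀ ∈ C := by
    rw [show z₀ = ((1 - lam : ℝ), (0 : EuclideanSpace ℝ (Fin n))) from rfl, hslice]
    refine ⟨⟨by linarith, by linarith⟩, k₀, hk₀, k₀, hk₀, ?_⟩
    module
  set J : Set (ℝ × (ℝ × EuclideanSpace ℝ (Fin n))) :=
    (fun p : ℝ × (ℝ × EuclideanSpace ℝ (Fin n)) => (p.1, (1 - p.1) • z₀ + p.1 • p.2)) ''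
      ((Icc (0:ℝ) 1) ×ˢ C) with hJdef
  have hJcomp : IsCompact J := (isCompact_Icc.prod hCcomp).image (by fun_prop)
  have hJm : MeasurableSet J := hJcomp.isClosed.measurableSet
  have hJ1 : ∀ (r : ℝ) (z : ℝ × EuclideanSpace ℝ (Fin n)), ((r, z) ∈ J ↔
      (r ∈ Icc (0:ℝ) 1 ∧ ∃ w ∈ C, z = (1-r) • z₀ + r • w)) := by
    intro r z
    constructor
    · rintro ⟨⟨r', w⟩, hmem, heq⟩
      obtain ⟨hr', hw⟩ := mem_prod.mp hmem
      obtain ⟨h1, h2⟩ := Prod.ext_iff.mp heq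
      simp only at h1 h2
      subst h1
      exact ⟨hr', w, hw, h2.symm⟩
    · rintro ⟨hr, w, hw, hz⟩
      refine ⟨(r, w), mem_prod.mpr ⟨hr, hw⟩, ?_⟩
      show ((r:ℝ), (1 - r) • z₀ + r • w) = (r, z)
      rw [← hz]
  have hJC : ∀ (r : ℝ) (z : ℝ × EuclideanSpace ℝ (Fin n)), (r, z) ∈ J → z ∈ C := by
    intro r z hrz
    obtain ⟨hr, w, hw, hz⟩ := (hJ1 r z).mp hrz
    rw [hz]
    have h1r : (0:ℝ) ≤ 1 - r := by linarith [hr.2]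
    exact hCconv hz₀ hw h1r hr.1 (by ring)
  set G : (ℝ × EuclideanSpace ℝ (Fin n)) → ℝ≥0∞ := fun z =>
    volume ((((1 - z.1) * (1 - lam)) • K) ∩ (z.2 +ᵥ ((z.1 * lam) • K))) with hGdef
  set mE : ℝ≥0∞ := ENNReal.ofReal ((lam * (1 - lam))^n) * vK with hmEdef
  have hmlpos : 0 < lam * (1 - lam) := by nlinarith
  have hmE0 : mE ≠ 0 := by
    rw [hmEdef]
    exact mul_ne_zero (by simp [ENNReal.ofReal_eq_zero]; positivity) hvK0
  have hmEfin : mE ≠ ⊤ := ENNReal.mul_ne_top ENNReal.ofReal_ne_top hvKfin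
  -- geometric core
  have hP2 : ∀ (r : ℝ) (z : ℝ × EuclideanSpace ℝ (Fin n)), (r, z) ∈ J →
      mE * ENNReal.ofReal ((1-r)^n) ≤ G z := by
    intro r z hrz
    obtain ⟨hr, w, hw, hzw⟩ := (hJ1 r z).mp hrz
    obtain ⟨hs, a, ha, b, hb, hy⟩ := (hslice w.1 w.2).mp (by rwa [Prod.mk.eta])
    have h1r : (0:ℝ) ≤ 1 - r := by linarith [hr.2]
    have h1w : (0:ℝ) ≤ 1 - w.1 := by linarith [hs.2]
    have h1lam : (0:ℝ) ≤ 1 - lam := by linarith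
    have hz1 : z.1 = (1-r) * (1 - lam) + r * w.1 := by
      rw [hzw]
      simp [hz₀def, smul_eq_mul]
    have hz2 : z.2 = r • w.2 := by
      rw [hzw]
      simp [hz₀def]
    have hincl : ((r • (((1 - w.1)*(1-lam)) • a)) +ᵥ ((1-r) • ((lam * (1-lam)) • K)))
        ⊆ ((((1 - z.1) * (1 - lam)) • K) ∩ (z.2 +ᵥ ((z.1 * lam) • K))) := by
      rintro e ⟨q1, hq1, rfl⟩
      obtain ⟨q2, hq2, rfl⟩ := mem_smul_set.mp hq1
      obtain ⟨k, hk, rfl⟩ := mem_smul_set.mp hq2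
      simp only [vadd_eq_add]
      constructor
      · have hco : (r*((1 - w.1)*(1-lam))) + ((1-r)*(lam*(1-lam))) = (1 - z.1)*(1-lam) := by
          rw [hz1]; ring
        have hmm := combo_mem hK_conv hne' (c₁ := r*((1 - w.1)*(1-lam)))
          (c₂ := (1-r)*(lam*(1-lam)))
          (mul_nonneg hr.1 (mul_nonneg h1w h1lam))
          (mul_nonneg h1r hmlpos.le) ha hk
        rw [hco] at hmm
        rw [smul_smul, smul_smul]
        exact hmm
      · refine ⟨(r*(w.1*lam)) • b + ((1-r)*(lam*(1-lam))) • k, ?_, ?_⟩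
        · have hco2 : (r*(w.1*lam)) + ((1-r)*(lam*(1-lam))) = z.1*lam := by
            rw [hz1]; ring
          have hmm := combo_mem hK_conv hne' (c₁ := r*(w.1*lam))
            (c₂ := (1-r)*(lam*(1-lam)))
            (mul_nonneg hr.1 (mul_nonneg hs.1 hl0))
            (mul_nonneg h1r hmlpos.le) hb hk
          rwa [hco2] at hmm
        · simp only [vadd_eq_add]
          rw [hz2, hy]
          module
    have hvol : volume ((r • (((1 - w.1)*(1-lam)) • a)) +ᵥ ((1-r) • ((lam * (1-lam)) • K)))
        = ENNReal.ofReal ((1-r)^n) * mE := by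
      rw [measure_vadd, Measure.addHaar_smul, Measure.addHaar_smul,
        finrank_euclideanSpace_fin, hmEdef,
        abs_of_nonneg (pow_nonneg h1r n), abs_of_nonneg (pow_nonneg hmlpos.le n)]
    calc mE * ENNReal.ofReal ((1-r)^n)
        = volume ((r • (((1 - w.1)*(1-lam)) • a)) +ᵥ ((1-r) • ((lam * (1-lam)) • K))) := by
          rw [hvol]; ring
      _ ≤ G z := measure_mono hincl
  set c : ℝ → ℝ≥0∞ := fun r => ENNReal.ofReal ((n:ℝ) * (1-r)^(n-1)) with hcdef
  have hcmeas : Measurable fun p : ℝ × (ℝ × EuclideanSpace ℝ (Fin n)) => c p.1 := by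
    apply ENNReal.measurable_ofReal.comp
    exact (measurable_const.mul ((measurable_const.sub measurable_fst).pow_const _))
  set F : ℝ × (ℝ × EuclideanSpace ℝ (Fin n)) → ℝ≥0∞ := J.indicator (fun p => c p.1)
    with hFdef
  have hFm : Measurable F := hcmeas.indicator hJm
  have hFz : ∀ (r : ℝ) (z : ℝ × EuclideanSpace ℝ (Fin n)),
      F (r, z) = ({z' | (r, z') ∈ J}).indicator (fun _ => c r) z := by
    intro r z
    rw [hFdef]
    simp only [Set.indicator_apply, mem_setOf_eq]
  have hP1 : ∀ z : ℝ × EuclideanSpace ℝ (Fin n), mE * (∫⁻ r, F (r, z)) ≤ G z := by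
    intro z
    have hFz' : ∀ r, F (r, z) = ({r' : ℝ | (r', z) ∈ J}).indicator c r := by
      intro r
      rw [hFdef]
      simp only [Set.indicator_apply, mem_setOf_eq]
    rcases eq_empty_or_nonempty {r' : ℝ | (r', z) ∈ J} with hR | hR
    · have : ∀ r : ℝ, F (r, z) = 0 := by
        intro r; rw [hFz' r, hR]; simp
      rw [lintegral_congr this]
      simp
    · set ρ := sInf {r' : ℝ | (r', z) ∈ J} with hρdef
      have hRsub : {r' : ℝ | (r', z) ∈ J} ⊆ Icc (0:ℝ) 1 :=
        fun r hr => ((hJ1 r z).mp hr).1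
      have hbdd : BddBelow {r' : ℝ | (r', z) ∈ J} := ⟨0, fun r hr => (hRsub hr).1⟩
      have hρ1 : ρ ≤ 1 := by
        obtain ⟨r, hr⟩ := hR
        exact le_trans (csInf_le hbdd hr) (hRsub hr).2
      have hsub2 : {r' : ℝ | (r', z) ∈ J} ⊆ Icc ρ 1 :=
        fun r hr => ⟨csInf_le hbdd hr, (hRsub hr).2⟩
      have step1 : (∫⁻ r, F (r, z)) ≤ ∫⁻ r in Icc ρ 1, c r := by
        rw [← lintegral_indicator measurableSet_Icc]
        refine lintegral_mono fun r => ?_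
        rw [hFz' r]
        exact Set.indicator_le_indicator_of_subset hsub2 (fun _ => zero_le) r
      have step2 : (∫⁻ r in Icc ρ 1, c r) = ENNReal.ofReal ((1-ρ)^n) := by
        rw [hcdef]
        simp only []
        rw [lint_Icc hρ1 (f := fun r => (n:ℝ) * (1-r)^(n-1)) (continuous_const.mul ((continuous_const.sub continuous_id').pow (n-1)))
          (fun x hx => mul_nonneg (Nat.cast_nonneg n)
            (pow_nonneg (by linarith [hx.2]) _)),
          integral_n_onesub hnpos ρ]
      have step3 : mE * ENNReal.ofReal ((1-ρ)^n) ≤ G z := by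
        have hcl : IsClosed {r : ℝ | mE * ENNReal.ofReal ((1-r)^n) ≤ G z} := by
          apply isClosed_le _ continuous_const
          exact (ENNReal.continuous_const_mul hmEfin).comp
            (ENNReal.continuous_ofReal.comp ((continuous_const.sub continuous_id').pow n))
        have hsubs : {r' : ℝ | (r', z) ∈ J} ⊆ {r : ℝ | mE * ENNReal.ofReal ((1-r)^n) ≤ G z} :=
          fun r hr => hP2 r z hr
        have hclos : closure {r' : ℝ | (r', z) ∈ J}
            ⊆ {r : ℝ | mE * ENNReal.ofReal ((1-r)^n) ≤ G z} :=
          hcl.closure_subset_iff.mpr hsubs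
        exact hclos (csInf_mem_closure hR hbdd)
      calc mE * (∫⁻ r, F (r, z)) ≤ mE * ENNReal.ofReal ((1-ρ)^n) := by
            apply mul_le_mul_right
            rw [← step2]
            exact step1
        _ ≤ G z := step3
  set Ir : ℝ := ∫ r in (0:ℝ)..1, r^n * (1-r)^n with hIrdef
  have hIrpos : 0 < Ir := by
    rw [hIrdef]
    apply intervalIntegral.intervalIntegral_pos_of_pos_on
      (Continuous.intervalIntegrable
        ((continuous_pow n).mul ((continuous_const.sub continuous_id').pow n)) _ _)
    · intro x hx
      have h1 : 0 < x := hx.1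
      have h2 : (0:ℝ) < 1 - x := by linarith [hx.2]
      exact mul_pos (pow_pos h1 n) (pow_pos h2 n)
    · norm_num
  -- LHS computation
  have hDr : ∀ r ∈ Icc (0:ℝ) 1, {z | (r, z) ∈ J} = (((1 - r) • z₀) +ᵥ (r • C)) := by
    intro r hr
    ext z
    simp only [mem_setOf_eq]
    rw [hJ1 r z]
    constructor
    · rintro ⟨-, w, hw, rfl⟩
      exact ⟨r • w, smul_mem_smul_set hw, rfl⟩
    · rintro ⟨u, hu, rfl⟩
      obtain ⟨w, hw, rfl⟩ := mem_smul_set.mp hu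
      exact ⟨hr, w, hw, rfl⟩
  have hDrc : ∀ r : ℝ, IsCompact (((1 - r) • z₀) +ᵥ (r • C)) := fun r =>
    (hCcomp.smul r).vadd ((1 - r) • z₀)
  have hinner : ∀ r : ℝ, (∫⁻ z, F (r, z)) =
      (Icc (0:ℝ) 1).indicator
        (fun r => c r * (ENNReal.ofReal (r^(n+1)) * volume C)) r := by
    intro r
    rw [lintegral_congr (hFz r)]
    by_cases hr : r ∈ Icc (0:ℝ) 1
    · rw [indicator_of_mem hr, hDr r hr,
        lintegral_indicator_const (hDrc r).isClosed.measurableSet]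
      congr 1
      rw [measure_vadd, Measure.addHaar_smul, hfr, abs_of_nonneg (pow_nonneg hr.1 _)]
    · rw [indicator_of_notMem hr]
      have hempty : {z' | (r, z') ∈ J} = (∅ : Set (ℝ × EuclideanSpace ℝ (Fin n))) := by
        ext z'
        simp only [mem_setOf_eq, mem_empty_iff_false, iff_false]
        intro hmem
        exact hr ((hJ1 r z').mp hmem).1
      rw [hempty]
      simp
  have hLHS : (∫⁻ r, ∫⁻ z, F (r, z)) =
      volume C * (ENNReal.ofReal ((n:ℝ)+1) * ENNReal.ofReal Ir) := by
    rw [lintegral_congr hinner, lintegral_indicator measurableSet_Icc]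
    have hptwise : ∀ r ∈ Icc (0:ℝ) 1, c r * (ENNReal.ofReal (r^(n+1)) * volume C)
        = ENNReal.ofReal ((n:ℝ) * (1-r)^(n-1) * r^(n+1)) * volume C := by
      intro r hr
      rw [hcdef]
      have hnn : (0:ℝ) ≤ (n:ℝ) * (1-r)^(n-1) :=
        mul_nonneg (Nat.cast_nonneg n) (pow_nonneg (by linarith [hr.2]) _)
      rw [ENNReal.ofReal_mul hnn, mul_assoc]
    rw [setLIntegral_congr_fun measurableSet_Icc hptwise,
      lintegral_mul_const' _ _ hCfin,
      lint_Icc zero_le_one (f := fun r => (n:ℝ) * (1-r)^(n-1) * r^(n+1))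
        ((continuous_const.mul ((continuous_const.sub continuous_id').pow (n-1))).mul
          (continuous_pow (n+1)))
        (fun x hx => mul_nonneg
          (mul_nonneg (Nat.cast_nonneg n) (pow_nonneg (by linarith [hx.2]) _))
          (pow_nonneg hx.1 _)),
      beta_rel hnpos, ← hIrdef, ENNReal.ofReal_mul (by positivity)]
    ring
  have hswap : (∫⁻ r, ∫⁻ z, F (r, z)) = ∫⁻ z, ∫⁻ r, F (r, z) :=
    lintegral_lintegral_swap hFm.aemeasurable
  have hhm : Measurable fun z : ℝ × EuclideanSpace ℝ (Fin n) => ∫⁻ r, F (r, z) :=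
    Measurable.lintegral_prod_left hFm
  have hTon : (∫⁻ z, ∫⁻ r, F (r, z)) = ∫⁻ t, ∫⁻ x, ∫⁻ r, F (r, (t, x)) := by
    rw [Measure.volume_eq_prod, lintegral_prod _ hhm.aemeasurable]
  have hWt : ∀ t : ℝ, (∫⁻ x, mE * ∫⁻ r, F (r, (t, x))) ≤
      (Icc (0:ℝ) 1).indicator (fun t => (ENNReal.ofReal (((1-t)*(1-lam))^n) * vK) *
        (ENNReal.ofReal ((t*lam)^n) * vK)) t := by
    intro t
    by_cases ht : t ∈ Icc (0:ℝ) 1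
    · rw [indicator_of_mem ht]
      refine le_trans (lintegral_mono fun x => hP1 (t, x)) ?_
      have hSm : MeasurableSet (((1-t)*(1-lam)) • K) :=
        (hK_compact.smul ((1-t)*(1-lam))).isClosed.measurableSet
      have hTm : MeasurableSet ((t*lam) • K) :=
        (hK_compact.smul (t*lam)).isClosed.measurableSet
      have := conv_vol hSm hTm
      rw [hGdef]
      simp only
      rw [this, Measure.addHaar_smul, Measure.addHaar_smul, finrank_euclideanSpace_fin,
        abs_of_nonneg (pow_nonneg (mul_nonneg (by linarith [ht.2]) (by linarith)) n),
        abs_of_nonneg (pow_nonneg (mul_nonneg ht.1 hl0) n)]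
    · rw [indicator_of_notMem ht]
      have hzero : ∀ x : EuclideanSpace ℝ (Fin n), (∫⁻ r, F (r, (t, x))) = 0 := by
        intro x
        have : ∀ r : ℝ, F (r, (t, x)) = 0 := by
          intro r
          rw [hFdef]
          apply Set.indicator_of_notMem
          intro hmem
          exact ht ((hslice t x).mp (hJC r (t, x) hmem)).1
        rw [lintegral_congr this]
        simp
      have : ∀ x : EuclideanSpace ℝ (Fin n), mE * (∫⁻ r, F (r, (t, x))) = 0 := by
        intro x; rw [hzero x]; simp
      rw [lintegral_congr this]
      simp
  have hW : (∫⁻ t, (Icc (0:ℝ) 1).indicator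
        (fun t => (ENNReal.ofReal (((1-t)*(1-lam))^n) * vK) *
          (ENNReal.ofReal ((t*lam)^n) * vK)) t)
      = vK * vK * ENNReal.ofReal (lam^n * (1-lam)^n) * ENNReal.ofReal Ir := by
    rw [lintegral_indicator measurableSet_Icc]
    have hptwise : ∀ t ∈ Icc (0:ℝ) 1,
        (ENNReal.ofReal (((1-t)*(1-lam))^n) * vK) * (ENNReal.ofReal ((t*lam)^n) * vK)
        = (vK * vK * ENNReal.ofReal (lam^n * (1-lam)^n)) * ENNReal.ofReal (t^n * (1-t)^n) := by
      intro t ht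
      have hre : ((1-t)*(1-lam))^n * (t*lam)^n = (lam^n * (1-lam)^n) * (t^n * (1-t)^n) := by
        rw [mul_pow, mul_pow]; ring
      calc (ENNReal.ofReal (((1-t)*(1-lam))^n) * vK) * (ENNReal.ofReal ((t*lam)^n) * vK)
          = ENNReal.ofReal (((1-t)*(1-lam))^n * (t*lam)^n) * (vK * vK) := by
            rw [ENNReal.ofReal_mul (pow_nonneg (mul_nonneg (by linarith [ht.2]) (by linarith)) n)]
            ring
        _ = (vK * vK * ENNReal.ofReal (lam^n * (1-lam)^n)) * ENNReal.ofReal (t^n * (1-t)^n) := by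
            rw [hre, ENNReal.ofReal_mul
              (mul_nonneg (pow_nonneg hl0 n) (pow_nonneg (by linarith : (0:ℝ) ≤ 1 - lam) n))]
            ring
    rw [setLIntegral_congr_fun measurableSet_Icc hptwise,
      lintegral_const_mul' _ _
        (ENNReal.mul_ne_top (ENNReal.mul_ne_top hvKfin hvKfin) ENNReal.ofReal_ne_top),
      lint_Icc zero_le_one (f := fun t => t^n * (1-t)^n)
        ((continuous_pow n).mul ((continuous_const.sub continuous_id').pow n))
        (fun x hx => mul_nonneg (pow_nonneg hx.1 _) (pow_nonneg (by linarith [hx.2]) _)),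
      ← hIrdef]
  have hmain : mE * (volume C * (ENNReal.ofReal ((n:ℝ)+1) * ENNReal.ofReal Ir))
      ≤ vK * vK * ENNReal.ofReal (lam^n * (1-lam)^n) * ENNReal.ofReal Ir := by
    calc mE * (volume C * (ENNReal.ofReal ((n:ℝ)+1) * ENNReal.ofReal Ir))
        = mE * (∫⁻ r, ∫⁻ z, F (r, z)) := by rw [hLHS]
      _ = mE * ∫⁻ z, ∫⁻ r, F (r, z) := by rw [hswap]
      _ = mE * ∫⁻ t, ∫⁻ x, ∫⁻ r, F (r, (t, x)) := by rw [hTon]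
      _ = ∫⁻ t, mE * ∫⁻ x, ∫⁻ r, F (r, (t, x)) := (lintegral_const_mul' _ _ hmEfin).symm
      _ = ∫⁻ t, ∫⁻ x, mE * ∫⁻ r, F (r, (t, x)) :=
          lintegral_congr fun t => (lintegral_const_mul' _ _ hmEfin).symm
      _ ≤ ∫⁻ t, (Icc (0:ℝ) 1).indicator
            (fun t => (ENNReal.ofReal (((1-t)*(1-lam))^n) * vK) *
              (ENNReal.ofReal ((t*lam)^n) * vK)) t := lintegral_mono hWt
      _ = vK * vK * ENNReal.ofReal (lam^n * (1-lam)^n) * ENNReal.ofReal Ir := hW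
  have hmE' : mE = ENNReal.ofReal (lam^n * (1-lam)^n) * vK := by
    rw [hmEdef, mul_pow]
  have hkey : (volume C * ENNReal.ofReal ((n:ℝ)+1)) *
        (ENNReal.ofReal (lam^n * (1-lam)^n) * vK * ENNReal.ofReal Ir)
      ≤ vK * (ENNReal.ofReal (lam^n * (1-lam)^n) * vK * ENNReal.ofReal Ir) := by
    calc (volume C * ENNReal.ofReal ((n:ℝ)+1)) *
          (ENNReal.ofReal (lam^n * (1-lam)^n) * vK * ENNReal.ofReal Ir)
        = mE * (volume C * (ENNReal.ofReal ((n:ℝ)+1) * ENNReal.ofReal Ir)) := by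
          rw [hmE']; ring
      _ ≤ vK * vK * ENNReal.ofReal (lam^n * (1-lam)^n) * ENNReal.ofReal Ir := hmain
      _ = vK * (ENNReal.ofReal (lam^n * (1-lam)^n) * vK * ENNReal.ofReal Ir) := by ring
  have hX0 : (ENNReal.ofReal (lam^n * (1-lam)^n) * vK * ENNReal.ofReal Ir) ≠ 0 := by
    apply mul_ne_zero
    apply mul_ne_zero
    · simp only [ne_eq, ENNReal.ofReal_eq_zero, not_le]
      exact mul_pos (pow_pos hlam0 n) (pow_pos (by linarith : (0:ℝ) < 1 - lam) n)
    · exact hvK0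
    · simp only [ne_eq, ENNReal.ofReal_eq_zero, not_le]
      exact hIrpos
  have hXfin : (ENNReal.ofReal (lam^n * (1-lam)^n) * vK * ENNReal.ofReal Ir) ≠ ⊤ :=
    ENNReal.mul_ne_top (ENNReal.mul_ne_top ENNReal.ofReal_ne_top hvKfin)
      ENNReal.ofReal_ne_top
  have hfin2 : volume C * ENNReal.ofReal ((n:ℝ)+1) ≤ vK :=
    (ENNReal.mul_le_mul_iff_left hX0 hXfin).mp hkey
  rw [ofReal_nat_add_one] at hfin2
  rw [ENNReal.le_div_iff_mul_le (Or.inl (by simp)) (Or.inl (by simp))]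
  exact hfin2
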